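/- Let X be a convex polyomino such that V(X) ⊆ ℕ² is a sublattice of ℕ² with minimum (0,0) and maximum (m,n), and fix an injective order-preserving map ω from JI(X) to ℕ. If μ is a maximal chain of V(X) and i ∈ Des(μ), then i+1 ∉ Des(μ); in other words, no maximal chain has two consecutive descents. -/

import Mathlib

/-!  Cells in ℤ² are identified with their top-right corners: the cell `C v`
is the unit square `[v.1 - 1, v.1] × [v.2 - 1, v.2] ⊆ ℝ²`. -/

/-- Two cells (identified by their top-right corners) are adjacent if they share an edge. -/
def Adj (c d : ℤ × ℤ) : Prop :=
  (c.1 = d.1 ∧ (c.2 = d.2 + 1 ∨ d.2 = c.2 + 1)) ∨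
  (c.2 = d.2 ∧ (c.1 = d.1 + 1 ∨ d.1 = c.1 + 1))

/-- A polyomino: a nonempty finite set of cells, connected under adjacency. -/
def IsPolyomino (X : Finset (ℤ × ℤ)) : Prop :=
  X.Nonempty ∧ ∀ c ∈ X, ∀ d ∈ X,
    Relation.ReflTransGen (fun a b => a ∈ X ∧ b ∈ X ∧ Adj a b) c d

/-- A polyomino is convex if it is both row-convex and column-convex. -/
def IsConvexPoly (X : Finset (ℤ × ℤ)) : Prop :=
  (∀ a b x y : ℤ, (a, y) ∈ X → (b, y) ∈ X → a ≤ x → x ≤ b → (x, y) ∈ X) ∧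
  (∀ a b x y : ℤ, (y, a) ∈ X → (y, b) ∈ X → a ≤ x → x ≤ b → (y, x) ∈ X)

/-- `X` is thin if it contains no 2 × 2 block of four cells. -/
def IsThin (X : Finset (ℤ × ℤ)) : Prop :=
  ¬ ∃ w : ℤ × ℤ, w ∈ X ∧ w + ((1, 0) : ℤ × ℤ) ∈ X ∧
    w + ((0, 1) : ℤ × ℤ) ∈ X ∧ w + ((1, 1) : ℤ × ℤ) ∈ X

/-- `X` is `L`-convex: convex, and any two cells are joined by a monotone path of cells
of `X` changing direction (horizontal to vertical or vice versa) at most once. -/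
def IsLConvexPoly (X : Finset (ℤ × ℤ)) : Prop :=
  IsConvexPoly X ∧ ∀ c ∈ X, ∀ d ∈ X,
    ((∀ x : ℤ, min c.1 d.1 ≤ x → x ≤ max c.1 d.1 → ((x, c.2) : ℤ × ℤ) ∈ X) ∧
     (∀ y : ℤ, min c.2 d.2 ≤ y → y ≤ max c.2 d.2 → ((d.1, y) : ℤ × ℤ) ∈ X)) ∨
    ((∀ y : ℤ, min c.2 d.2 ≤ y → y ≤ max c.2 d.2 → ((c.1, y) : ℤ × ℤ) ∈ X) ∧
     (∀ x : ℤ, min c.1 d.1 ≤ x → x ≤ max c.1 d.1 → ((x, d.2) : ℤ × ℤ) ∈ X))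

/-- The vertex set `V(X)`: all corners of cells of `X`, partially ordered componentwise. -/
def Verts (X : Finset (ℤ × ℤ)) : Set (ℤ × ℤ) :=
  {v | ∃ c ∈ X, v = c ∨ v = c - ((1, 0) : ℤ × ℤ) ∨
    v = c - ((0, 1) : ℤ × ℤ) ∨ v = c - ((1, 1) : ℤ × ℤ)}

/-- Setup: `V(X) ⊆ ℕ²` is a sublattice of `ℕ²` (closed under componentwise max and min)
with minimum `(0,0)` and maximum `(m,n)`. -/
def LatticeSetup (X : Finset (ℤ × ℤ)) (m n : ℕ) : Prop :=
  (∀ a ∈ Verts X, ∀ b ∈ Verts X, a ⊔ b ∈ Verts X ∧ a ⊓ b ∈ Verts X) ∧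
  ((0, 0) : ℤ × ℤ) ∈ Verts X ∧ (((m : ℤ), (n : ℤ)) : ℤ × ℤ) ∈ Verts X ∧
  ∀ v ∈ Verts X, ((0, 0) : ℤ × ℤ) ≤ v ∧ v ≤ (((m : ℤ), (n : ℤ)) : ℤ × ℤ)

/-- Join-irreducible elements of the lattice `V(X)`: nonminimal elements that are not
the join of two elements strictly below them. -/
def JoinIrr (X : Finset (ℤ × ℤ)) : Set (ℤ × ℤ) :=
  {p | p ∈ Verts X ∧ (∃ q ∈ Verts X, q < p) ∧
    ∀ a ∈ Verts X, ∀ b ∈ Verts X, a < p → b < p → a ⊔ b ≠ p}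

/-- `ω` is an injective order-preserving map from `JI(X)` to `ℕ`. -/
def OmegaOK (X : Finset (ℤ × ℤ)) (ω : ℤ × ℤ → ℕ) : Prop :=
  Set.InjOn ω (JoinIrr X) ∧
  ∀ p ∈ JoinIrr X, ∀ q ∈ JoinIrr X, p ≤ q → ω p ≤ ω q

/-- A maximal chain of `V(X)`, written as a monotone unit lattice path
`μ 0 = (0,0) < μ 1 < ⋯ < μ (m+n) = (m,n)` through vertices of `X`
(normalized by `μ i = (m,n)` for `i ≥ m+n`). -/
def IsMaxChainPath (X : Finset (ℤ × ℤ)) (m n : ℕ) (μ : ℕ → ℤ × ℤ) : Prop :=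
  μ 0 = (0, 0) ∧
  (∀ i, i < m + n → μ (i + 1) - μ i = ((1, 0) : ℤ × ℤ) ∨
    μ (i + 1) - μ i = ((0, 1) : ℤ × ℤ)) ∧
  (∀ i, m + n ≤ i → μ i = (((m : ℤ), (n : ℤ)) : ℤ × ℤ)) ∧
  (∀ i, i ≤ m + n → μ i ∈ Verts X)

/-- `i` is a descent of the maximal chain `μ`:  `ω p_i > ω p_{i+1}`, where `p_j` is the
unique join-irreducible `p` with `p ≤ μ j` and `p ≰ μ (j-1)`. -/
def DescentAt (X : Finset (ℤ × ℤ)) (ω : ℤ × ℤ → ℕ) (μ : ℕ → ℤ × ℤ) (i : ℕ) : Prop :=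
  ∃ p ∈ JoinIrr X, ∃ q ∈ JoinIrr X,
    p ≤ μ i ∧ ¬ p ≤ μ (i - 1) ∧ q ≤ μ (i + 1) ∧ ¬ q ≤ μ i ∧ ω q < ω p

/-- The descent set of a maximal chain: descents `i` with `1 ≤ i ≤ m+n-1`. -/
def Des (X : Finset (ℤ × ℤ)) (m n : ℕ) (ω : ℤ × ℤ → ℕ) (μ : ℕ → ℤ × ℤ) : Set ℕ :=
  {i | 1 ≤ i ∧ i < m + n ∧ DescentAt X ω μ i}

/-- `|M_k(X)|`: the number of maximal chains of `V(X)` with exactly `k` descents. -/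
noncomputable def numChains (X : Finset (ℤ × ℤ)) (m n : ℕ) (ω : ℤ × ℤ → ℕ) (k : ℕ) : ℕ :=
  Set.ncard {μ : ℕ → ℤ × ℤ | IsMaxChainPath X m n μ ∧ (Des X m n ω μ).ncard = k}

/-- A `k`-rook configuration in `X`: `k` cells of `X`, no two in the same row or column. -/
def IsRookConfig (X : Finset (ℤ × ℤ)) (k : ℕ) (S : Finset (ℤ × ℤ)) : Prop :=
  ↑S ⊆ (↑X : Set (ℤ × ℤ)) ∧ S.card = k ∧
  ∀ c ∈ S, ∀ d ∈ S, c ≠ d → c.1 ≠ d.1 ∧ c.2 ≠ d.2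

/-- `r_k`: the number of `k`-rook configurations in `X`. -/
noncomputable def rook (X : Finset (ℤ × ℤ)) (k : ℕ) : ℕ :=
  Set.ncard {S : Finset (ℤ × ℤ) | IsRookConfig X k S}

/-- The map `ψ`: sends a maximal chain `μ` to the set of cells `C (μ (i+1))` for `i ∈ Des μ`. -/
def psi (X : Finset (ℤ × ℤ)) (m n : ℕ) (ω : ℤ × ℤ → ℕ) (μ : ℕ → ℤ × ℤ) :
    Set (ℤ × ℤ) :=
  (fun i => μ (i + 1)) '' Des X m n ω μ

/-- The ideal `I_X` of the polyomino ring: generated by the inner 2-minors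
`x_a x_b - x_c x_d` for intervals `[a,b]` of `V(X)`. -/
noncomputable def polyominoIdeal (kk : Type*) [Field kk] (X : Finset (ℤ × ℤ)) :
    Ideal (MvPolynomial (Verts X) kk) :=
  Ideal.span {f | ∃ a b c d : Verts X,
    (a : ℤ × ℤ) < (b : ℤ × ℤ) ∧
    (c : ℤ × ℤ) = (((a : ℤ × ℤ).1, (b : ℤ × ℤ).2) : ℤ × ℤ) ∧
    (d : ℤ × ℤ) = (((b : ℤ × ℤ).1, (a : ℤ × ℤ).2) : ℤ × ℤ) ∧
    f = MvPolynomial.X a * MvPolynomial.X b - MvPolynomial.X c * MvPolynomial.X d}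

/-- `dim_k (k[X])_i`: the dimension of the degree-`i` graded component of `k[X] = R/I_X`,
realized as the image of the homogeneous degree-`i` part of `R` in the quotient. -/
noncomputable def hilbCoeff (kk : Type*) [Field kk] (X : Finset (ℤ × ℤ)) (i : ℕ) : ℕ :=
  Module.finrank kk (Submodule.map
    (Ideal.Quotient.mkₐ kk (polyominoIdeal kk X)).toLinearMap
    (MvPolynomial.homogeneousSubmodule (Verts X) kk i))

/-- The Hilbert series `HS(t) = Σ_{i ≥ 0} dim_k (k[X])_i t^i ∈ ℤ[[t]]`. -/
noncomputable def hilbSeries (kk : Type*) [Field kk] (X : Finset (ℤ × ℤ)) :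
    PowerSeries ℤ :=
  PowerSeries.mk fun i => (hilbCoeff kk X i : ℤ)

/-- The region `⋃ X ⊆ ℝ²` covered by the cells of `X`. -/
def Region (X : Finset (ℤ × ℤ)) : Set (ℝ × ℝ) :=
  ⋃ c ∈ X, Set.Icc (((c.1 : ℝ) - 1, (c.2 : ℝ) - 1) : ℝ × ℝ) (((c.1 : ℝ), (c.2 : ℝ)) : ℝ × ℝ)

/-- Left-boundary vertices: top-left corners of cells of `X` lying on the topological
boundary of the region `⋃ X ⊆ ℝ²`. -/
def LeftBdry (X : Finset (ℤ × ℤ)) : Set (ℤ × ℤ) :=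
  {v | (∃ c ∈ X, v = c - ((1, 0) : ℤ × ℤ)) ∧
    (((v.1 : ℝ), (v.2 : ℝ)) : ℝ × ℝ) ∈ frontier (Region X)}

/-- Bottom-boundary vertices: bottom-right corners of cells of `X` lying on the topological
boundary of the region `⋃ X ⊆ ℝ²`. -/
def BottomBdry (X : Finset (ℤ × ℤ)) : Set (ℤ × ℤ) :=
  {v | (∃ c ∈ X, v = c - ((0, 1) : ℤ × ℤ)) ∧
    (((v.1 : ℝ), (v.2 : ℝ)) : ℝ × ℝ) ∈ frontier (Region X)}


lemma key_col (X : Finset (ℤ × ℤ))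
    (hl : ∀ a ∈ Verts X, ∀ b ∈ Verts X, a ⊔ b ∈ Verts X ∧ a ⊓ b ∈ Verts X)
    {p u v : ℤ × ℤ} (hp : p ∈ JoinIrr X) (hv : v ∈ Verts X)
    (hstep : u - v = ((1, 0) : ℤ × ℤ))
    (hpu : p ≤ u) (hpv : ¬ p ≤ v) :
    p.1 = u.1 ∧ ∀ r ∈ Verts X, r.1 = u.1 → p.2 ≤ r.2 := by
  obtain ⟨hpV, -, hirr⟩ := hp
  have h1 : u.1 - v.1 = 1 := congrArg Prod.fst hstep
  have h2 : u.2 - v.2 = 0 := congrArg Prod.snd hstep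
  rw [Prod.le_def] at hpu hpv
  push_neg at hpv
  have hp1 : p.1 = u.1 := by
    by_cases hc : p.1 ≤ v.1
    · have := hpv hc; omega
    · omega
  refine ⟨hp1, ?_⟩
  intro r hr hr1
  by_contra hcon
  push_neg at hcon
  have hbV := (hl p hpV v hv).2
  have hinf : p ⊓ v = (v.1, p.2) := by
    have he : p ⊓ v = (min p.1 v.1, min p.2 v.2) := rfl
    rw [he, Prod.mk.injEq]
    constructor <;> [omega; omega]
  refine hirr r hr (p ⊓ v) hbV ?_ ?_ ?_
  · refine lt_of_le_of_ne (Prod.le_def.mpr ⟨by omega, by omega⟩) ?_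
    intro h; have := congrArg Prod.snd h; omega
  · refine lt_of_le_of_ne inf_le_left ?_
    rw [hinf]; intro h; have := congrArg Prod.fst h; simp only at this; omega
  · rw [hinf]
    have he : r ⊔ ((v.1, p.2) : ℤ × ℤ) = (max r.1 v.1, max r.2 p.2) := rfl
    rw [he, Prod.ext_iff]
    constructor <;> simp only <;> omega

lemma key_row (X : Finset (ℤ × ℤ))
    (hl : ∀ a ∈ Verts X, ∀ b ∈ Verts X, a ⊔ b ∈ Verts X ∧ a ⊓ b ∈ Verts X)
    {p u v : ℤ × ℤ} (hp : p ∈ JoinIrr X) (hv : v ∈ Verts X)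
    (hstep : u - v = ((0, 1) : ℤ × ℤ))
    (hpu : p ≤ u) (hpv : ¬ p ≤ v) :
    p.2 = u.2 ∧ ∀ r ∈ Verts X, r.2 = u.2 → p.1 ≤ r.1 := by
  obtain ⟨hpV, -, hirr⟩ := hp
  have h1 : u.1 - v.1 = 0 := congrArg Prod.fst hstep
  have h2 : u.2 - v.2 = 1 := congrArg Prod.snd hstep
  rw [Prod.le_def] at hpu hpv
  push_neg at hpv
  have hp2 : p.2 = u.2 := by
    by_cases hc : p.1 ≤ v.1
    · have := hpv hc; omega
    · omega
  refine ⟨hp2, ?_⟩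
  intro r hr hr2
  by_contra hcon
  push_neg at hcon
  have hbV := (hl p hpV v hv).2
  have hinf : p ⊓ v = (p.1, v.2) := by
    have he : p ⊓ v = (min p.1 v.1, min p.2 v.2) := rfl
    rw [he, Prod.mk.injEq]
    constructor <;> [omega; omega]
  refine hirr r hr (p ⊓ v) hbV ?_ ?_ ?_
  · refine lt_of_le_of_ne (Prod.le_def.mpr ⟨by omega, by omega⟩) ?_
    intro h; have := congrArg Prod.fst h; omega
  · refine lt_of_le_of_ne inf_le_left ?_
    rw [hinf]; intro h; have := congrArg Prod.snd h; simp only at this; omega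
  · rw [hinf]
    have he : r ⊔ ((p.1, v.2) : ℤ × ℤ) = (max r.1 p.1, max r.2 v.2) := rfl
    rw [he, Prod.ext_iff]
    constructor <;> simp only <;> omega

lemma le_of_colmin (X : Finset (ℤ × ℤ))
    (hl : ∀ a ∈ Verts X, ∀ b ∈ Verts X, a ⊔ b ∈ Verts X ∧ a ⊓ b ∈ Verts X)
    {p q : ℤ × ℤ} (hpV : p ∈ Verts X) (hqV : q ∈ Verts X)
    (hmin : ∀ r ∈ Verts X, r.1 = p.1 → p.2 ≤ r.2)
    (h : p.1 ≤ q.1) : p ≤ q := by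
  have hiV := (hl p hpV q hqV).2
  have hinf : p ⊓ q = (min p.1 q.1, min p.2 q.2) := rfl
  have h2 := hmin (p ⊓ q) hiV (by rw [hinf]; simp only; omega)
  rw [hinf] at h2
  simp only at h2
  exact Prod.le_def.mpr ⟨h, by omega⟩

lemma le_of_rowmin (X : Finset (ℤ × ℤ))
    (hl : ∀ a ∈ Verts X, ∀ b ∈ Verts X, a ⊔ b ∈ Verts X ∧ a ⊓ b ∈ Verts X)
    {p q : ℤ × ℤ} (hpV : p ∈ Verts X) (hqV : q ∈ Verts X)
    (hmin : ∀ r ∈ Verts X, r.2 = p.2 → p.1 ≤ r.1)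
    (h : p.2 ≤ q.2) : p ≤ q := by
  have hiV := (hl p hpV q hqV).2
  have hinf : p ⊓ q = (min p.1 q.1, min p.2 q.2) := rfl
  have h2 := hmin (p ⊓ q) hiV (by rw [hinf]; simp only; omega)
  rw [hinf] at h2
  simp only at h2
  exact Prod.le_def.mpr ⟨by omega, h⟩


theorem no_consecutive_descents (X : Finset (ℤ × ℤ)) (m n : ℕ)
    (hpoly : IsPolyomino X) (hconv : IsConvexPoly X)
    (hlat : LatticeSetup X m n)
    (ω : ℤ × ℤ → ℕ) (hω : OmegaOK X ω)
    (μ : ℕ → ℤ × ℤ) (hμ : IsMaxChainPath X m n μ)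
    (i : ℕ) (hi : i ∈ Des X m n ω μ) :
    i + 1 ∉ Des X m n ω μ := by
  obtain ⟨hμ0, hstep, htop, hvert⟩ := hμ
  obtain ⟨hl, -, -, -⟩ := hlat
  obtain ⟨hinj, hmono⟩ := hω
  obtain ⟨hi1, hi2, p, hpJ, q, hqJ, hple, hpnle, hqle, hqnle, hlt⟩ := hi
  rintro ⟨-, hi2', p', hp'J, q', hq'J, hp'le, hp'nle, hq'le, hq'nle, hlt'⟩
  simp only [Nat.add_sub_cancel] at hp'nle hp'le
  have hs1 := hstep (i - 1) (by omega)
  rw [Nat.sub_add_cancel hi1] at hs1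
  have hs2 := hstep i (by omega)
  have hs3 := hstep (i + 1) (by omega)
  have hv0 := hvert (i - 1) (by omega)
  have hv1 := hvert i (by omega)
  have hv2 := hvert (i + 1) (by omega)
  have hv3 := hvert (i + 1 + 1) (by omega)
  have hc2f : (μ (i+1)).1 - (μ i).1 = (μ (i+1) - μ i).1 := rfl
  have hc2s : (μ (i+1)).2 - (μ i).2 = (μ (i+1) - μ i).2 := rfl
  have hc3f : (μ (i + 1 + 1)).1 - (μ (i+1)).1 = (μ (i + 1 + 1) - μ (i+1)).1 := rfl
  have hc3s : (μ (i + 1 + 1)).2 - (μ (i+1)).2 = (μ (i + 1 + 1) - μ (i+1)).2 := rfl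
  rcases hs2 with h2 | h2
  · -- step i+1 horizontal
    have Hq := key_col X hl hqJ hv1 h2 hqle hqnle
    have Hp' := key_col X hl hp'J hv1 h2 hp'le hp'nle
    have hqp' : q = p' := by
      have h1 := Hq.2 p' hp'J.1 Hp'.1
      have h2' := Hp'.2 q hqJ.1 Hq.1
      rw [Prod.ext_iff]
      exact ⟨Hq.1.trans Hp'.1.symm, le_antisymm h1 h2'⟩
    have hf2 : (μ (i+1)).1 = (μ i).1 + 1 := by
      have := congrArg Prod.fst h2; rw [← hc2f] at this; simp only at this; omega
    rcases hs1 with h1 | h1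
    · -- step i horizontal too : p ≤ q
      have Hp := key_col X hl hpJ hv0 h1 hple hpnle
      have hpq : p ≤ q := by
        refine le_of_colmin X hl hpJ.1 hqJ.1 ?_ ?_
        · intro r hr hr1; exact Hp.2 r hr (by rw [← Hp.1]; exact hr1)
        · rw [Hp.1, Hq.1]; omega
      exact absurd (hmono p hpJ q hqJ hpq) (by omega)
    · rcases hs3 with h3 | h3
      · -- step i+2 horizontal : p' ≤ q'
        have Hq' := key_col X hl hq'J hv2 h3 hq'le hq'nle
        have hf3 : (μ (i + 1 + 1)).1 = (μ (i+1)).1 + 1 := by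
          have := congrArg Prod.fst h3; rw [← hc3f] at this; simp only at this; omega
        have hpq : p' ≤ q' := by
          refine le_of_colmin X hl hp'J.1 hq'J.1 ?_ ?_
          · intro r hr hr1; exact Hp'.2 r hr (by rw [← Hp'.1]; exact hr1)
          · rw [Hp'.1, Hq'.1]; omega
        exact absurd (hmono p' hp'J q' hq'J hpq) (by omega)
      · -- steps: V, H, V : p ≤ q'
        have Hp := key_row X hl hpJ hv0 h1 hple hpnle
        have Hq' := key_row X hl hq'J hv2 h3 hq'le hq'nle
        have hss2 : (μ (i+1)).2 = (μ i).2 := by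
          have := congrArg Prod.snd h2; rw [← hc2s] at this; simp only at this; omega
        have hss3 : (μ (i + 1 + 1)).2 = (μ (i+1)).2 + 1 := by
          have := congrArg Prod.snd h3; rw [← hc3s] at this; simp only at this; omega
        have hpq : p ≤ q' := by
          refine le_of_rowmin X hl hpJ.1 hq'J.1 ?_ ?_
          · intro r hr hr2; exact Hp.2 r hr (by rw [← Hp.1]; exact hr2)
          · rw [Hp.1, Hq'.1]
            have hple2 := Prod.le_def.mp hple
            omega
        have := hmono p hpJ q' hq'J hpq
        rw [hqp'] at hlt
        omega
  · -- step i+1 vertical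
    have Hq := key_row X hl hqJ hv1 h2 hqle hqnle
    have Hp' := key_row X hl hp'J hv1 h2 hp'le hp'nle
    have hqp' : q = p' := by
      have h1 := Hq.2 p' hp'J.1 Hp'.1
      have h2' := Hp'.2 q hqJ.1 Hq.1
      rw [Prod.ext_iff]
      exact ⟨le_antisymm h1 h2', Hq.1.trans Hp'.1.symm⟩
    have hf2 : (μ (i+1)).2 = (μ i).2 + 1 := by
      have := congrArg Prod.snd h2; rw [← hc2s] at this; simp only at this; omega
    rcases hs1 with h1 | h1
    · rcases hs3 with h3 | h3
      · -- steps: H, V, H : p ≤ q'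
        have Hp := key_col X hl hpJ hv0 h1 hple hpnle
        have Hq' := key_col X hl hq'J hv2 h3 hq'le hq'nle
        have hss2 : (μ (i+1)).1 = (μ i).1 := by
          have := congrArg Prod.fst h2; rw [← hc2f] at this; simp only at this; omega
        have hss3 : (μ (i + 1 + 1)).1 = (μ (i+1)).1 + 1 := by
          have := congrArg Prod.fst h3; rw [← hc3f] at this; simp only at this; omega
        have hpq : p ≤ q' := by
          refine le_of_colmin X hl hpJ.1 hq'J.1 ?_ ?_
          · intro r hr hr1; exact Hp.2 r hr (by rw [← Hp.1]; exact hr1)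
          · rw [Hp.1, Hq'.1]
            have hple2 := Prod.le_def.mp hple
            omega
        have := hmono p hpJ q' hq'J hpq
        rw [hqp'] at hlt
        omega
      · -- steps: ?, V, V : p' ≤ q'
        have Hq' := key_row X hl hq'J hv2 h3 hq'le hq'nle
        have hf3 : (μ (i + 1 + 1)).2 = (μ (i+1)).2 + 1 := by
          have := congrArg Prod.snd h3; rw [← hc3s] at this; simp only at this; omega
        have hpq : p' ≤ q' := by
          refine le_of_rowmin X hl hp'J.1 hq'J.1 ?_ ?_
          · intro r hr hr2; exact Hp'.2 r hr (by rw [← Hp'.1]; exact hr2)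
          · rw [Hp'.1, Hq'.1]; omega
        exact absurd (hmono p' hp'J q' hq'J hpq) (by omega)
    · -- steps: V, V : p ≤ q
      have Hp := key_row X hl hpJ hv0 h1 hple hpnle
      have hpq : p ≤ q := by
        refine le_of_rowmin X hl hpJ.1 hqJ.1 ?_ ?_
        · intro r hr hr2; exact Hp.2 r hr (by rw [← Hp.1]; exact hr2)
        · rw [Hp.1, Hq.1]; omega
      exact absurd (hmono p hpJ q hqJ hpq) (by omega)
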